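/- Let n ≥ 1. Let P be an n×n entrywise nonnegative matrix with row sums at most 1, with spectral radius ρ(P) < 1, and let p = (I − P)𝟙 (which is entrywise nonnegative). Let B be an n×n entrywise nonnegative matrix and b ∈ ℝⁿ entrywise nonnegative, and let 0 < c_l ≤ c_u satisfy c_l·P ≤ B ≤ c_u·P and c_l·p ≤ b ≤ c_u·p entrywise. Then there exists f ∈ ℝⁿ with f ≥ 0 entrywise, f ≠ 0, fᵀ B = ρ(B)·fᵀ, and fᵀ b > 0, where ρ(B) is the spectral radius of B. -/

import Mathlib

set_option autoImplicit false

open Finset Matrix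
open Filter Topology
open scoped ENNReal NNReal

/-- The spectral radius of a real square matrix: the maximum modulus of its complex
eigenvalues. -/
noncomputable def specRad {n : Type*} [Fintype n] [DecidableEq n] (M : Matrix n n ℝ) : ℝ :=
  sSup {x : ℝ | ∃ z : ℂ, z ∈ spectrum ℂ (M.map (Complex.ofReal : ℝ → ℂ)) ∧ x = ‖z‖}


lemma geom_tsum_mul {R : Type*} [NormedRing R] [CompleteSpace R] (x : R)
    (hx : Summable fun j : ℕ => x ^ j) :
    (1 - x) * ∑' j : ℕ, x ^ j = 1 ∧ (∑' j : ℕ, x ^ j) * (1 - x) = 1 := by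
  have h0 : ∑' j : ℕ, x ^ (j + 1) = (∑' j : ℕ, x ^ j) - 1 := by
    have h := Summable.tsum_eq_zero_add hx
    rw [pow_zero] at h
    exact eq_sub_iff_add_eq'.mpr h.symm
  constructor
  · have h1 : x * ∑' j : ℕ, x ^ j = ∑' j : ℕ, x ^ (j + 1) := by
      rw [← hx.tsum_mul_left x]
      exact tsum_congr fun j => (pow_succ' x j).symm
    rw [sub_mul, one_mul, h1, h0, sub_sub_cancel]
  · have h1 : (∑' j : ℕ, x ^ j) * x = ∑' j : ℕ, x ^ (j + 1) := by
      rw [← hx.tsum_mul_right x]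
      exact tsum_congr fun j => (pow_succ x j).symm
    rw [mul_sub, mul_one, h1, h0, sub_sub_cancel]

section Aux
variable {n : ℕ} {𝕜 : Type*} [RCLike 𝕜]

attribute [local instance] Matrix.linftyOpNormedAddCommGroup Matrix.linftyOpNormedRing
  Matrix.linftyOpNormedAlgebra Matrix.linfty_opNormOneClass

noncomputable local instance : CompleteSpace (Matrix (Fin n) (Fin n) 𝕜) :=
  inferInstance

lemma resolvent_eq (A : Matrix (Fin n) (Fin n) 𝕜) (z : 𝕜) (hz : z ≠ 0)
    (hsum : Summable fun j : ℕ => (z⁻¹ • A) ^ j) :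
    (z • (1 : Matrix (Fin n) (Fin n) 𝕜) - A) * (∑' j : ℕ, (z⁻¹) ^ (j+1) • A ^ j) = 1 ∧
    (∑' j : ℕ, (z⁻¹) ^ (j+1) • A ^ j) * (z • (1 : Matrix (Fin n) (Fin n) 𝕜) - A) = 1 := by
  set x := z⁻¹ • A with hxdef
  have hfact : z • (1 : Matrix (Fin n) (Fin n) 𝕜) - A = z • (1 - x) := by
    rw [smul_sub, hxdef, smul_smul, mul_inv_cancel₀ hz, one_smul]
  have hrep : (∑' j : ℕ, (z⁻¹) ^ (j+1) • A ^ j) = z⁻¹ • ∑' j : ℕ, x ^ j := by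
    rw [← Summable.tsum_const_smul z⁻¹ hsum]
    refine tsum_congr fun j => ?_
    rw [hxdef, smul_pow, smul_smul, ← pow_succ']
  obtain ⟨hL, hR⟩ := geom_tsum_mul x hsum
  constructor
  · rw [hrep, hfact, smul_mul_smul_comm, mul_inv_cancel₀ hz, one_smul]; exact hL
  · rw [hrep, hfact, smul_mul_smul_comm, inv_mul_cancel₀ hz, one_smul]; exact hR

end Aux

section Aux2
variable {n : ℕ}

attribute [local instance] Matrix.linftyOpNormedAddCommGroup Matrix.linftyOpNormedRing
  Matrix.linftyOpNormedAlgebra Matrix.linfty_opNormOneClass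

noncomputable local instance {𝕜 : Type*} [RCLike 𝕜] :
    CompleteSpace (Matrix (Fin n) (Fin n) 𝕜) :=
  inferInstance

lemma matrix_nontrivial (hn : 0 < n) : Nontrivial (Matrix (Fin n) (Fin n) ℂ) := by
  refine nontrivial_of_ne 1 0 fun h => ?_
  have := congr_fun (congr_fun h ⟨0, hn⟩) ⟨0, hn⟩
  simp [Matrix.one_apply] at this

lemma specRad_spec (hn : 0 < n) (M : Matrix (Fin n) (Fin n) ℝ) :
    (∃ z ∈ spectrum ℂ (M.map (Complex.ofReal : ℝ → ℂ)), ‖z‖ = specRad M) ∧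
    (∀ z ∈ spectrum ℂ (M.map (Complex.ofReal : ℝ → ℂ)), ‖z‖ ≤ specRad M) := by
  haveI := matrix_nontrivial hn
  set A := M.map (Complex.ofReal : ℝ → ℂ)
  have hS : {x : ℝ | ∃ z : ℂ, z ∈ spectrum ℂ A ∧ x = ‖z‖}
      = norm '' (spectrum ℂ A) := by
    ext x
    constructor
    · rintro ⟨z, hz, rfl⟩; exact ⟨z, hz, rfl⟩
    · rintro ⟨z, hz, rfl⟩; exact ⟨z, hz, rfl⟩
  have hcpt : IsCompact (norm '' (spectrum ℂ A)) :=
    (spectrum.isCompact A).image continuous_norm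
  have hne : (norm '' (spectrum ℂ A)).Nonempty :=
    (spectrum.nonempty A).image _
  have hmem := hcpt.sSup_mem hne
  have hbdd := hcpt.bddAbove
  constructor
  · obtain ⟨z, hz, hz'⟩ := hmem
    exact ⟨z, hz, by rw [specRad, hS]; exact hz'⟩
  · intro z hz
    rw [specRad, hS]
    exact le_csSup hbdd ⟨z, hz, rfl⟩

lemma spectralRadius_eq (hn : 0 < n) (M : Matrix (Fin n) (Fin n) ℝ) :
    spectralRadius ℂ (M.map (Complex.ofReal : ℝ → ℂ)) = ENNReal.ofReal (specRad M) := by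
  obtain ⟨⟨z₀, hz₀, hz₀'⟩, hub⟩ := specRad_spec hn M
  apply le_antisymm
  · rw [spectralRadius]
    refine iSup₂_le fun z hz => ?_
    rw [← ENNReal.ofReal_coe_nnreal, coe_nnnorm]
    exact ENNReal.ofReal_le_ofReal (hub z hz)
  · have h1 : (‖z₀‖₊ : ℝ≥0∞) ≤ spectralRadius ℂ (M.map (Complex.ofReal : ℝ → ℂ)) := by
      unfold spectralRadius
      exact le_iSup₂ (f := fun (z : ℂ) (_ : z ∈ spectrum ℂ (M.map (Complex.ofReal : ℝ → ℂ))) => (‖z‖₊ : ℝ≥0∞)) z₀ hz₀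
    calc ENNReal.ofReal (specRad M) = (‖z₀‖₊ : ℝ≥0∞) := by
          rw [← hz₀', ← coe_nnnorm, ENNReal.ofReal_coe_nnreal]
      _ ≤ _ := h1

lemma specRad_nonneg (hn : 0 < n) (M : Matrix (Fin n) (Fin n) ℝ) : 0 ≤ specRad M := by
  obtain ⟨⟨z₀, _, hz₀'⟩, _⟩ := specRad_spec hn M
  rw [← hz₀']; positivity

end Aux2

section Aux3
variable {n : ℕ}

attribute [local instance] Matrix.linftyOpNormedAddCommGroup Matrix.linftyOpNormedRing
  Matrix.linftyOpNormedAlgebra Matrix.linfty_opNormOneClass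

noncomputable local instance {𝕜 : Type*} [RCLike 𝕜] :
    CompleteSpace (Matrix (Fin n) (Fin n) 𝕜) :=
  inferInstance

lemma map_ofReal_pow (M : Matrix (Fin n) (Fin n) ℝ) (k : ℕ) :
    (M.map (Complex.ofReal : ℝ → ℂ)) ^ k = (M ^ k).map (Complex.ofReal : ℝ → ℂ) := by
  have h : ∀ N : Matrix (Fin n) (Fin n) ℝ, N.map (Complex.ofReal : ℝ → ℂ)
      = Complex.ofRealHom.mapMatrix N := fun _ => rfl
  rw [h, h, ← map_pow]

lemma nnnorm_map_ofReal (M : Matrix (Fin n) (Fin n) ℝ) :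
    ‖M.map (Complex.ofReal : ℝ → ℂ)‖₊ = ‖M‖₊ := by
  rw [Matrix.linfty_opNNNorm_def, Matrix.linfty_opNNNorm_def]
  congr 1
  funext i
  simp [Matrix.map_apply]

lemma norm_map_ofReal (M : Matrix (Fin n) (Fin n) ℝ) :
    ‖M.map (Complex.ofReal : ℝ → ℂ)‖ = ‖M‖ := by
  rw [← coe_nnnorm, ← coe_nnnorm, nnnorm_map_ofReal]

lemma eventual_pow_bound (A : Matrix (Fin n) (Fin n) ℂ) (ρ : ℝ) (hρ : 0 < ρ)
    (h : spectralRadius ℂ A < ENNReal.ofReal ρ) :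
    ∀ᶠ k in atTop, ‖A ^ k‖ ≤ ρ ^ k := by
  have hg := spectrum.pow_nnnorm_pow_one_div_tendsto_nhds_spectralRadius A
  filter_upwards [hg.eventually_lt_const h, eventually_ge_atTop 1] with k hk hk1
  have hkne : (k : ℝ) ≠ 0 := Nat.cast_ne_zero.mpr (by omega)
  have h2 : ((‖A ^ k‖₊ : ℝ≥0∞) ^ (1 / (k : ℝ))) ^ (k : ℝ) ≤ (ENNReal.ofReal ρ) ^ (k : ℝ) :=
    ENNReal.rpow_le_rpow hk.le (by positivity)
  rw [← ENNReal.rpow_mul, one_div, inv_mul_cancel₀ hkne, ENNReal.rpow_one,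
    ENNReal.rpow_natCast, ← ENNReal.ofReal_pow hρ.le, ← ENNReal.ofReal_coe_nnreal, coe_nnnorm] at h2
  exact (ENNReal.ofReal_le_ofReal_iff (by positivity)).mp h2

lemma summable_scaled {𝕜 : Type*} [RCLike 𝕜] (A : Matrix (Fin n) (Fin n) 𝕜) (ρ μ : ℝ)
    (hρ : 0 < ρ) (hμ : ρ < μ) (hbd : ∀ᶠ k in atTop, ‖A ^ k‖ ≤ ρ ^ k)
    (z : 𝕜) (hz : ‖z‖ = μ) :
    Summable fun j : ℕ => (z⁻¹ • A) ^ j := by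
  have hμ0 : 0 < μ := hρ.trans hμ
  refine Summable.of_norm_bounded_eventually_nat (g := fun j => (ρ / μ) ^ j)
    (summable_geometric_of_lt_one (by positivity) (by rw [div_lt_one hμ0]; exact hμ)) ?_
  filter_upwards [hbd] with k hk
  rw [smul_pow, norm_smul, norm_pow, norm_inv, hz]
  calc (μ⁻¹) ^ k * ‖A ^ k‖ ≤ (μ⁻¹) ^ k * ρ ^ k :=
        mul_le_mul_of_nonneg_left hk (by positivity)
    _ = (ρ / μ) ^ k := by rw [div_pow, div_eq_mul_inv, inv_pow, mul_comm]

end Aux3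

section Aux4
variable {n : ℕ}

attribute [local instance] Matrix.linftyOpNormedAddCommGroup Matrix.linftyOpNormedRing
  Matrix.linftyOpNormedAlgebra Matrix.linfty_opNormOneClass

noncomputable local instance {𝕜 : Type*} [RCLike 𝕜] :
    CompleteSpace (Matrix (Fin n) (Fin n) 𝕜) :=
  inferInstance

lemma one_le_specRad (hn : 0 < n) (M : Matrix (Fin n) (Fin n) ℝ)
    (h : ∀ k : ℕ, (1 : ℝ) ≤ ‖M ^ k‖) : 1 ≤ specRad M := by
  haveI := matrix_nontrivial (n := n) hn
  have hg := spectrum.pow_nnnorm_pow_one_div_tendsto_nhds_spectralRadius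
    (M.map (Complex.ofReal : ℝ → ℂ))
  have hone : ∀ k : ℕ,
      (1 : ℝ≥0∞) ≤ (‖(M.map (Complex.ofReal : ℝ → ℂ)) ^ k‖₊ : ℝ≥0∞) ^ (1 / (k : ℝ)) := by
    intro k
    have h1 : (1 : ℝ≥0) ≤ ‖M ^ k‖₊ := by
      rw [← NNReal.coe_le_coe, coe_nnnorm, NNReal.coe_one]; exact h k
    have h2 : (1 : ℝ≥0∞) ≤ (‖(M.map (Complex.ofReal : ℝ → ℂ)) ^ k‖₊ : ℝ≥0∞) := by
      rw [map_ofReal_pow, nnnorm_map_ofReal]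
      exact_mod_cast h1
    calc (1 : ℝ≥0∞) = 1 ^ (1 / (k : ℝ)) := (ENNReal.one_rpow _).symm
      _ ≤ _ := ENNReal.rpow_le_rpow h2 (by positivity)
  have hlim : (1 : ℝ≥0∞) ≤ spectralRadius ℂ (M.map (Complex.ofReal : ℝ → ℂ)) :=
    ge_of_tendsto' hg hone
  rw [spectralRadius_eq hn M] at hlim
  exact ENNReal.one_le_ofReal.mp hlim

end Aux4

section Aux5
variable {n : ℕ}

attribute [local instance] Matrix.linftyOpNormedAddCommGroup Matrix.linftyOpNormedRing
  Matrix.linftyOpNormedAlgebra Matrix.linfty_opNormOneClass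

noncomputable local instance {𝕜 : Type*} [RCLike 𝕜] :
    CompleteSpace (Matrix (Fin n) (Fin n) 𝕜) :=
  inferInstance

lemma pow_entries_nonneg (P : Matrix (Fin n) (Fin n) ℝ) (hP0 : ∀ i j, 0 ≤ P i j) :
    ∀ k i j, 0 ≤ (P ^ k) i j := by
  intro k
  induction k with
  | zero => intro i j; by_cases h : i = j <;> simp [Matrix.one_apply, h]
  | succ k ih =>
    intro i j
    rw [pow_succ, Matrix.mul_apply]
    exact Finset.sum_nonneg fun l _ => mul_nonneg (ih i l) (hP0 l j)

lemma dot_pos (hn : 0 < n) (P B : Matrix (Fin n) (Fin n) ℝ) (b : Fin n → ℝ) (cl : ℝ)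
    (hcl : 0 < cl)
    (hP0 : ∀ i j, 0 ≤ P i j) (hProw : ∀ i, ∑ j, P i j ≤ 1) (hPspec : specRad P < 1)
    (hB0 : ∀ i j, 0 ≤ B i j) (hb0 : ∀ i, 0 ≤ b i)
    (hBl : ∀ i j, cl * P i j ≤ B i j)
    (hbl : ∀ i, cl * ((1 - P) *ᵥ (fun _ => (1 : ℝ))) i ≤ b i)
    (f : Fin n → ℝ) (hf0 : ∀ i, 0 ≤ f i) (hfne : f ≠ 0) (r : ℝ) (hr : 0 ≤ r)
    (heig : f ᵥ* B = r • f) : 0 < f ⬝ᵥ b := by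
  obtain ⟨i₀, hi₀ne⟩ := Function.ne_iff.mp hfne
  have hi₀ : 0 < f i₀ := lt_of_le_of_ne (hf0 i₀) (Ne.symm hi₀ne)
  rcases lt_or_ge 0 (f ⬝ᵥ b) with h | h
  · exact h
  exfalso
  -- each term of the dot product vanishes
  have hsum0 : ∑ i, f i * b i = 0 := by
    have h1 : 0 ≤ ∑ i, f i * b i :=
      Finset.sum_nonneg fun i _ => mul_nonneg (hf0 i) (hb0 i)
    have h2 : f ⬝ᵥ b = ∑ i, f i * b i := rfl
    rw [h2] at h
    linarith
  have hzero : ∀ i, f i * b i = 0 := by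
    intro i
    have := (Finset.sum_eq_zero_iff_of_nonneg
      (fun i _ => mul_nonneg (hf0 i) (hb0 i))).mp hsum0
    exact this i (mem_univ i)
  have hbS : ∀ i, 0 < f i → b i = 0 := fun i hi =>
    (mul_eq_zero.mp (hzero i)).resolve_left (ne_of_gt hi)
  -- row sums are 1 on the support of f
  have hmv : ∀ i, ((1 - P) *ᵥ (fun _ => (1 : ℝ))) i = 1 - ∑ j, P i j := by
    intro i
    simp only [Matrix.mulVec, dotProduct, Matrix.sub_apply, mul_one, Finset.sum_sub_distrib]
    congr 1
    simp [Matrix.one_apply]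
  have hrow1 : ∀ i, 0 < f i → ∑ j, P i j = 1 := by
    intro i hi
    have h1 := hbl i
    rw [hbS i hi, hmv i] at h1
    have h2 : 1 - ∑ j, P i j ≤ 0 := by nlinarith
    have := hProw i
    linarith
  -- eigen-equation componentwise
  have hvm : ∀ j, ∑ i, f i * B i j = r * f j := by
    intro j
    have := congr_fun heig j
    simpa [Matrix.vecMul, dotProduct] using this
  rcases eq_or_lt_of_le hr with hr0 | hrpos
  · -- r = 0 : every entry of row i₀ of B (hence of P) vanishes, contradicting row sum 1
    have hBrow : ∀ j, B i₀ j = 0 := by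
      intro j
      have h1 : ∑ i, f i * B i j = 0 := by rw [hvm j, ← hr0]; ring
      have h2 := (Finset.sum_eq_zero_iff_of_nonneg
        (fun i _ => mul_nonneg (hf0 i) (hB0 i j))).mp h1 i₀ (mem_univ i₀)
      exact (mul_eq_zero.mp h2).resolve_left (ne_of_gt hi₀)
    have hProw0 : ∀ j, P i₀ j = 0 := by
      intro j
      have := hBl i₀ j
      rw [hBrow j] at this
      nlinarith [hP0 i₀ j]
    have := hrow1 i₀ hi₀
    rw [Finset.sum_eq_zero fun j _ => hProw0 j] at this
    norm_num at this
  · -- r > 0 : support of f is P-closed, giving a substochastic invariant set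
    have hout : ∀ j, ¬(0 < f j) → ∀ i, 0 < f i → P i j = 0 := by
      intro j hj i hi
      have hfj : f j = 0 := le_antisymm (not_lt.mp hj) (hf0 j)
      have h1 : ∑ i, f i * B i j = 0 := by rw [hvm j, hfj]; ring
      have h2 := (Finset.sum_eq_zero_iff_of_nonneg
        (fun i _ => mul_nonneg (hf0 i) (hB0 i j))).mp h1 i (mem_univ i)
      have hBij : B i j = 0 := (mul_eq_zero.mp h2).resolve_left (ne_of_gt hi)
      have := hBl i j
      rw [hBij] at this
      nlinarith [hP0 i j]
    set v : Fin n → ℝ := fun j => if 0 < f j then (1 : ℝ) else 0 with hv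
    have hv0 : ∀ j, 0 ≤ v j := fun j => by by_cases hj : 0 < f j <;> simp [hv, hj]
    have hv1 : ∀ j, v j ≤ 1 := fun j => by by_cases hj : 0 < f j <;> simp [hv, hj]
    have hPv : ∀ i, 0 < f i → (P *ᵥ v) i = 1 := by
      intro i hi
      have h1 : ∀ j, P i j * v j = P i j := by
        intro j
        by_cases hj : 0 < f j
        · simp [hv, hj]
        · rw [hout j hj i hi]; ring
      calc (P *ᵥ v) i = ∑ j, P i j * v j := rfl
        _ = ∑ j, P i j := Finset.sum_congr rfl fun j _ => h1 j
        _ = 1 := hrow1 i hi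
    have hstep : ∀ w : Fin n → ℝ, (∀ j, v j ≤ w j) → ∀ i, v i ≤ (P *ᵥ w) i := by
      intro w hw i
      have hPvd : (P *ᵥ v) i = ∑ j, P i j * v j := rfl
      have hPwd : (P *ᵥ w) i = ∑ j, P i j * w j := rfl
      have hmono : (P *ᵥ v) i ≤ (P *ᵥ w) i := by
        rw [hPvd, hPwd]
        exact Finset.sum_le_sum fun j _ => mul_le_mul_of_nonneg_left (hw j) (hP0 i j)
      by_cases hi : 0 < f i
      · have := hPv i hi
        have hvi : v i = 1 := by simp [hv, hi]
        rw [hvi]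
        calc (1 : ℝ) = (P *ᵥ v) i := (hPv i hi).symm
          _ ≤ (P *ᵥ w) i := hmono
      · have hvi : v i = 0 := by simp [hv, hi]
        rw [hvi]
        rw [hPwd]
        refine Finset.sum_nonneg fun j _ => mul_nonneg (hP0 i j) ?_
        exact le_trans (hv0 j) (hw j)
    have hiter : ∀ k, ∀ i, v i ≤ ((P ^ k) *ᵥ v) i := by
      intro k
      induction k with
      | zero => intro i; rw [pow_zero, Matrix.one_mulVec]
      | succ k ih =>
        intro i
        rw [pow_succ', ← Matrix.mulVec_mulVec]
        exact hstep _ ih i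
    have hnorm : ∀ k : ℕ, (1 : ℝ) ≤ ‖P ^ k‖ := by
      intro k
      have h1 : (1 : ℝ) ≤ ∑ j, (P ^ k) i₀ j * v j := by
        have h2 := hiter k i₀
        have hvi : v i₀ = 1 := by simp [hv, hi₀]
        rw [hvi] at h2
        exact h2
      have h2 : ∑ j, (P ^ k) i₀ j * v j ≤ ∑ j, ‖(P ^ k) i₀ j‖ := by
        refine Finset.sum_le_sum fun j _ => ?_
        rw [Real.norm_eq_abs, abs_of_nonneg (pow_entries_nonneg P hP0 k i₀ j)]
        exact mul_le_of_le_one_right (pow_entries_nonneg P hP0 k i₀ j) (hv1 j)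
      have h3 : ∑ j, ‖(P ^ k) i₀ j‖ ≤ ‖P ^ k‖ := by
        have h4 := Finset.le_sup (f := fun i => ∑ j, ‖(P ^ k) i j‖₊) (mem_univ i₀)
        rw [Matrix.linfty_opNorm_def]
        have h5 : ∑ j, ‖(P ^ k) i₀ j‖ = ((∑ j, ‖(P ^ k) i₀ j‖₊ : ℝ≥0) : ℝ) := by
          push_cast
          rfl
        rw [h5]
        exact_mod_cast h4
      linarith
    exact absurd (one_le_specRad hn P hnorm) (not_le.mpr hPspec)

end Aux5

section Aux6
variable {n : ℕ}

attribute [local instance] Matrix.linftyOpNormedAddCommGroup Matrix.linftyOpNormedRing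
  Matrix.linftyOpNormedAlgebra Matrix.linfty_opNormOneClass

noncomputable local instance {𝕜 : Type*} [RCLike 𝕜] :
    CompleteSpace (Matrix (Fin n) (Fin n) 𝕜) :=
  inferInstance

lemma spectrum_transpose (N : Matrix (Fin n) (Fin n) ℂ) :
    spectrum ℂ Nᵀ = spectrum ℂ N := by
  ext z
  rw [spectrum.mem_iff, spectrum.mem_iff]
  have h : algebraMap ℂ (Matrix (Fin n) (Fin n) ℂ) z - Nᵀ
      = (algebraMap ℂ (Matrix (Fin n) (Fin n) ℂ) z - N)ᵀ := by
    rw [Matrix.transpose_sub]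
    congr 1
    rw [Matrix.algebraMap_eq_diagonal, Matrix.diagonal_transpose]
  rw [h, Matrix.isUnit_iff_isUnit_det, Matrix.det_transpose, ← Matrix.isUnit_iff_isUnit_det]

lemma specRad_transpose (M : Matrix (Fin n) (Fin n) ℝ) : specRad Mᵀ = specRad M := by
  unfold specRad
  rw [Matrix.transpose_map, spectrum_transpose]

lemma entry_nnnorm_le {𝕜 : Type*} [RCLike 𝕜] (M : Matrix (Fin n) (Fin n) 𝕜) (i j : Fin n) :
    ‖M i j‖₊ ≤ ‖M‖₊ := by
  rw [Matrix.linfty_opNNNorm_def]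
  calc ‖M i j‖₊ ≤ ∑ l, ‖M i l‖₊ :=
        Finset.single_le_sum (f := fun l => ‖M i l‖₊) (fun _ _ => bot_le) (mem_univ j)
    _ ≤ _ := Finset.le_sup (f := fun i => ∑ l, ‖M i l‖₊) (mem_univ i)

noncomputable def entryCLM (𝕜 : Type*) [RCLike 𝕜] (i j : Fin n) :
    Matrix (Fin n) (Fin n) 𝕜 →L[𝕜] 𝕜 :=
  LinearMap.mkContinuous
    { toFun := fun M => M i j
      map_add' := fun _ _ => rfl
      map_smul' := fun _ _ => rfl } 1
    (fun M => by
      rw [one_mul]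
      exact_mod_cast entry_nnnorm_le M i j)

@[simp] lemma entryCLM_apply {𝕜 : Type*} [RCLike 𝕜] (i j : Fin n)
    (M : Matrix (Fin n) (Fin n) 𝕜) : entryCLM 𝕜 i j M = M i j := rfl

lemma linfty_norm_le_of_entrywise (C : Matrix (Fin n) (Fin n) ℂ) (D : Matrix (Fin n) (Fin n) ℝ)
    (h : ∀ i j, ‖C i j‖ ≤ D i j) : ‖C‖ ≤ ‖D‖ := by
  have h' : ∀ i j, ‖C i j‖₊ ≤ ‖D i j‖₊ := by
    intro i j
    have h2 : ‖C i j‖ ≤ ‖D i j‖ := (h i j).trans (le_abs_self _)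
    exact_mod_cast h2
  rw [Matrix.linfty_opNorm_def, Matrix.linfty_opNorm_def]
  have : ((Finset.univ : Finset (Fin n)).sup fun i => ∑ j, ‖C i j‖₊)
      ≤ (Finset.univ : Finset (Fin n)).sup fun i => ∑ j, ‖D i j‖₊ :=
    Finset.sup_mono_fun fun i _ => Finset.sum_le_sum fun j _ => h' i j
  exact_mod_cast this

lemma linfty_norm_le_mulVec_one (N : Matrix (Fin n) (Fin n) ℝ) (hN : ∀ i j, 0 ≤ N i j) :
    ‖N‖ ≤ ‖N *ᵥ (fun _ => (1 : ℝ))‖ := by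
  set g := N *ᵥ (fun _ => (1 : ℝ)) with hg
  have hrow : ∀ i, ∑ j, ‖N i j‖ = ‖g i‖ := by
    intro i
    have h1 : g i = ∑ j, N i j := by
      simp [hg, Matrix.mulVec, dotProduct]
    rw [h1, Real.norm_eq_abs, abs_of_nonneg (Finset.sum_nonneg fun j _ => hN i j)]
    exact Finset.sum_congr rfl fun j _ => by
      rw [Real.norm_eq_abs, abs_of_nonneg (hN i j)]
  have h2 : ‖N‖₊ ≤ ‖g‖₊ := by
    rw [Matrix.linfty_opNNNorm_def]
    refine Finset.sup_le fun i _ => ?_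
    have h3 : ∑ j, ‖N i j‖₊ = ‖g i‖₊ := by
      have := hrow i
      ext
      push_cast
      exact this
    rw [h3]
    exact nnnorm_le_pi_nnnorm g i
  exact_mod_cast h2

lemma summable_series {𝕜 : Type*} [RCLike 𝕜] (A : Matrix (Fin n) (Fin n) 𝕜) (z : 𝕜)
    (hsum : Summable fun j : ℕ => (z⁻¹ • A) ^ j) :
    Summable fun j : ℕ => (z⁻¹) ^ (j + 1) • A ^ j := by
  have h := hsum.const_smul z⁻¹
  refine h.congr fun j => ?_
  rw [smul_pow, smul_smul, ← pow_succ']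

end Aux6

section Aux7
variable {n : ℕ}

attribute [local instance] Matrix.linftyOpNormedAddCommGroup Matrix.linftyOpNormedRing
  Matrix.linftyOpNormedAlgebra Matrix.linfty_opNormOneClass

noncomputable local instance {𝕜 : Type*} [RCLike 𝕜] :
    CompleteSpace (Matrix (Fin n) (Fin n) 𝕜) :=
  inferInstance

set_option maxHeartbeats 2000000 in
lemma exists_perron (hn : 0 < n) (B : Matrix (Fin n) (Fin n) ℝ) (hB0 : ∀ i j, 0 ≤ B i j) :
    ∃ f : Fin n → ℝ, (∀ i, 0 ≤ f i) ∧ f ≠ 0 ∧ f ᵥ* B = specRad B • f := by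
  haveI := matrix_nontrivial (n := n) hn
  haveI : Nonempty (Fin n) := ⟨⟨0, hn⟩⟩
  obtain ⟨r, hrdef⟩ : ∃ r, r = specRad B := ⟨_, rfl⟩
  rw [← hrdef]
  have hr0 : 0 ≤ r := hrdef ▸ specRad_nonneg hn B
  obtain ⟨A, hA⟩ : ∃ A, A = Bᵀ := ⟨_, rfl⟩
  have hA0 : ∀ i j, 0 ≤ A i j := fun i j => hA ▸ hB0 j i
  obtain ⟨Ac, hAc⟩ : ∃ Ac, Ac = A.map (Complex.ofReal : ℝ → ℂ) := ⟨_, rfl⟩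
  have hArad : specRad A = r := by rw [hA, specRad_transpose, hrdef]
  obtain ⟨⟨z₀, hz₀mem, hz₀abs⟩, _⟩ := specRad_spec hn A
  rw [hArad] at hz₀abs
  rw [← hAc] at hz₀mem
  have hsrad : spectralRadius ℂ Ac = ENNReal.ofReal r := by
    rw [hAc, spectralRadius_eq hn A, hArad]
  -- approximating parameters
  obtain ⟨μ, hμdef⟩ : ∃ μ : ℕ → ℝ, μ = fun k : ℕ => r + 1 / ((k : ℝ) + 1) := ⟨_, rfl⟩
  have hμpos : ∀ k, 0 < μ k := by
    intro k; rw [hμdef]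
    exact add_pos_of_nonneg_of_pos hr0 (by positivity)
  have hμgt : ∀ k, r < μ k := by
    intro k; rw [hμdef]
    exact lt_add_of_pos_right r (by positivity)
  have hμtend : Tendsto μ atTop (𝓝 r) := by
    rw [hμdef]
    have h1 : Tendsto (fun k : ℕ => 1 / ((k : ℝ) + 1)) atTop (𝓝 0) :=
      tendsto_one_div_add_atTop_nhds_zero_nat
    have h2 := (tendsto_const_nhds (x := r) (f := atTop (α := ℕ))).add h1
    rw [add_zero] at h2
    exact h2
  have hρpos : ∀ k, 0 < (r + μ k) / 2 := fun k =>
    half_pos (add_pos_of_nonneg_of_pos hr0 (hμpos k))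
  have hρltμ : ∀ k, (r + μ k) / 2 < μ k := fun k => by
    have := hμgt k; linarith
  have hbdC : ∀ k, ∀ᶠ m in atTop, ‖Ac ^ m‖ ≤ ((r + μ k) / 2) ^ m := by
    intro k
    refine eventual_pow_bound Ac _ (hρpos k) ?_
    rw [hsrad, ENNReal.ofReal_lt_ofReal_iff (hρpos k)]
    have := hμgt k; linarith
  have hbdR : ∀ k, ∀ᶠ m in atTop, ‖A ^ m‖ ≤ ((r + μ k) / 2) ^ m := by
    intro k
    refine (hbdC k).mono fun m hm => ?_
    have heq : ‖Ac ^ m‖ = ‖A ^ m‖ := by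
      rw [hAc, map_ofReal_pow, norm_map_ofReal]
    rwa [heq] at hm
  have hsumR : ∀ k, Summable fun j : ℕ => (((μ k : ℝ))⁻¹ • A) ^ j := fun k =>
    summable_scaled A _ _ (hρpos k) (hρltμ k) (hbdR k) (μ k)
      (Real.norm_of_nonneg (hμpos k).le)
  -- complex points of modulus μ k approaching z₀
  obtain ⟨z, hzdef⟩ : ∃ z : ℕ → ℂ,
      z = fun k => if r = 0 then (μ k : ℂ) else ((μ k / r : ℝ) : ℂ) * z₀ := ⟨_, rfl⟩
  have hzabs : ∀ k, ‖z k‖ = μ k := by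
    intro k
    by_cases h : r = 0
    · simp only [hzdef, if_pos h, Complex.norm_real, Real.norm_eq_abs]
      exact abs_of_pos (hμpos k)
    · simp only [hzdef, if_neg h]
      rw [norm_mul, Complex.norm_real, Real.norm_eq_abs, hz₀abs,
        abs_of_nonneg (div_nonneg (hμpos k).le hr0)]
      field_simp
  have hzne : ∀ k, z k ≠ 0 := by
    intro k h
    have h1 := hzabs k
    rw [h, norm_zero] at h1
    exact absurd h1.symm (ne_of_gt (hμpos k))
  have hztend : Tendsto z atTop (𝓝 z₀) := by
    rw [hzdef]
    by_cases h : r = 0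
    · have hz₀0 : z₀ = 0 := by
        have h2 := hz₀abs; rw [h] at h2
        exact norm_eq_zero.mp h2
      have h1 : Tendsto (fun k => ((μ k : ℝ) : ℂ)) atTop (𝓝 ((r : ℝ) : ℂ)) :=
        (Complex.continuous_ofReal.tendsto r).comp hμtend
      rw [hz₀0]
      simp only [if_pos h]
      rw [h] at h1
      simpa using h1
    · have h1 : Tendsto (fun k => μ k / r) atTop (𝓝 (r / r)) := hμtend.div_const r
      rw [div_self h] at h1
      have h2 : Tendsto (fun k => ((μ k / r : ℝ) : ℂ)) atTop (𝓝 ((1 : ℝ) : ℂ)) :=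
        (Complex.continuous_ofReal.tendsto 1).comp h1
      have h3 := h2.mul (tendsto_const_nhds (x := z₀))
      simp only [if_neg h]
      simpa using h3
  have hsumC : ∀ k, Summable fun j : ℕ => ((z k)⁻¹ • Ac) ^ j := fun k =>
    summable_scaled Ac _ _ (hρpos k) (hρltμ k) (hbdC k) (z k)
      (by rw [hzabs])
  -- resolvents
  obtain ⟨N, hNdef⟩ : ∃ N : ℕ → Matrix (Fin n) (Fin n) ℝ,
      N = fun k => ∑' j : ℕ, ((μ k : ℝ)⁻¹) ^ (j + 1) • A ^ j := ⟨_, rfl⟩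
  obtain ⟨Rc, hRcdef⟩ : ∃ Rc : ℕ → Matrix (Fin n) (Fin n) ℂ,
      Rc = fun k => ∑' j : ℕ, ((z k)⁻¹) ^ (j + 1) • Ac ^ j := ⟨_, rfl⟩
  have hμne : ∀ k, (μ k : ℝ) ≠ 0 := fun k => (hμpos k).ne'
  have hNid : ∀ k, (μ k • (1 : Matrix (Fin n) (Fin n) ℝ) - A) * N k = 1 ∧
      N k * (μ k • (1 : Matrix (Fin n) (Fin n) ℝ) - A) = 1 := by
    intro k; rw [hNdef]
    exact resolvent_eq A (μ k) (hμne k) (hsumR k)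
  have hRcid : ∀ k, (z k • (1 : Matrix (Fin n) (Fin n) ℂ) - Ac) * Rc k = 1 ∧
      Rc k * (z k • (1 : Matrix (Fin n) (Fin n) ℂ) - Ac) = 1 := by
    intro k; rw [hRcdef]
    exact resolvent_eq Ac (z k) (hzne k) (hsumC k)
  have hNsum : ∀ k, Summable fun j : ℕ => ((μ k : ℝ)⁻¹) ^ (j + 1) • A ^ j := fun k =>
    summable_series A (μ k) (hsumR k)
  have hRcsum : ∀ k, Summable fun j : ℕ => ((z k)⁻¹) ^ (j + 1) • Ac ^ j := fun k =>
    summable_series Ac (z k) (hsumC k)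
  have hNentry : ∀ k i j, N k i j = ∑' m : ℕ, ((μ k : ℝ)⁻¹) ^ (m + 1) * (A ^ m) i j := by
    intro k i j
    rw [hNdef]
    have h1 := (entryCLM ℝ i j).map_tsum (hNsum k)
    simpa using h1
  have hN0 : ∀ k i j, 0 ≤ N k i j := by
    intro k i j
    rw [hNentry]
    exact tsum_nonneg fun m =>
      mul_nonneg (pow_nonneg (inv_nonneg.mpr (hμpos k).le) _) (pow_entries_nonneg A hA0 m i j)
  have hNesum : ∀ k i j, Summable fun m : ℕ => ((μ k : ℝ)⁻¹) ^ (m + 1) * (A ^ m) i j := by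
    intro k i j
    have h1 := (hNsum k).map (entryCLM ℝ i j).toLinearMap.toAddMonoidHom
      (entryCLM ℝ i j).continuous
    exact h1.congr fun m => by simp
  have hterm : ∀ k (m : ℕ) i j,
      ‖(((z k)⁻¹) ^ (m + 1) • Ac ^ m) i j‖ = ((μ k : ℝ)⁻¹) ^ (m + 1) * (A ^ m) i j := by
    intro k m i j
    have h1 : (((z k)⁻¹) ^ (m + 1) • Ac ^ m) i j = ((z k)⁻¹) ^ (m + 1) * (Ac ^ m) i j := rfl
    rw [h1, norm_mul, norm_pow, norm_inv]
    have h2 : (Ac ^ m) i j = ((A ^ m) i j : ℂ) := by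
      rw [hAc, map_ofReal_pow]; rfl
    rw [h2, hzabs, Complex.norm_real, Real.norm_eq_abs,
      abs_of_nonneg (pow_entries_nonneg A hA0 m i j)]
  have hdom : ∀ k i j, ‖Rc k i j‖ ≤ N k i j := by
    intro k i j
    have h1 : Rc k i j = ∑' m : ℕ, (((z k)⁻¹) ^ (m + 1) • Ac ^ m) i j := by
      rw [hRcdef]
      have := (entryCLM ℂ i j).map_tsum (hRcsum k)
      simpa using this
    have hsnorm : Summable fun m : ℕ => ‖(((z k)⁻¹) ^ (m + 1) • Ac ^ m) i j‖ :=
      (hNesum k i j).congr fun m => (hterm k m i j).symm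
    rw [h1, hNentry]
    calc ‖∑' m : ℕ, (((z k)⁻¹) ^ (m + 1) • Ac ^ m) i j‖
        ≤ ∑' m : ℕ, ‖(((z k)⁻¹) ^ (m + 1) • Ac ^ m) i j‖ := norm_tsum_le_tsum_norm hsnorm
      _ = ∑' m : ℕ, ((μ k : ℝ)⁻¹) ^ (m + 1) * (A ^ m) i j := tsum_congr fun m => hterm k m i j
  have hRcN : ∀ k, ‖Rc k‖ ≤ ‖N k‖ := fun k => linfty_norm_le_of_entrywise _ _ (hdom k)
  -- blow-up of the resolvent norm
  have hblow : Tendsto (fun k => ‖N k‖) atTop atTop := by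
    rw [tendsto_atTop]
    intro C
    by_contra hev
    rw [not_eventually] at hev
    have hCpos : 0 < C := by
      rcases lt_or_ge 0 C with h | h
      · exact h
      · obtain ⟨k, hk⟩ := hev.exists
        exact absurd (h.trans (norm_nonneg _)) hk
    have hnear : ∀ᶠ k in atTop,
        ‖(z₀ • (1 : Matrix (Fin n) (Fin n) ℂ) - Ac) - (z k • 1 - Ac)‖ < C⁻¹ := by
      have h1 : ∀ k, (z₀ • (1 : Matrix (Fin n) (Fin n) ℂ) - Ac) - (z k • 1 - Ac)
          = (z₀ - z k) • (1 : Matrix (Fin n) (Fin n) ℂ) := by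
        intro k; rw [sub_smul]; abel
      have h3 : Tendsto (fun k => z₀ - z k) atTop (𝓝 0) := by
        have := (tendsto_const_nhds (x := z₀)).sub hztend
        simpa using this
      have h4 := h3.norm
      rw [norm_zero] at h4
      have h6 := h4.eventually_lt_const (by positivity : (0 : ℝ) < C⁻¹)
      refine h6.mono fun k hk => ?_
      rw [h1 k, norm_smul, norm_one, mul_one]
      exact hk
    obtain ⟨k, hk1, hk2⟩ := (hev.and_eventually hnear).exists
    rw [not_le] at hk1
    have hRcne : Rc k ≠ 0 := by
      intro h0
      have h1 := (hRcid k).2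
      rw [h0, zero_mul] at h1
      exact one_ne_zero h1.symm
    have hlt : ‖(z₀ • (1 : Matrix (Fin n) (Fin n) ℂ) - Ac)
        - ((⟨z k • 1 - Ac, Rc k, (hRcid k).1, (hRcid k).2⟩ : (Matrix (Fin n) (Fin n) ℂ)ˣ) :
            Matrix (Fin n) (Fin n) ℂ)‖
        < ‖((⟨z k • 1 - Ac, Rc k, (hRcid k).1, (hRcid k).2⟩ :
            (Matrix (Fin n) (Fin n) ℂ)ˣ)⁻¹ : (Matrix (Fin n) (Fin n) ℂ)ˣ).val‖⁻¹ := by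
      have h3 : 0 < ‖Rc k‖ := norm_pos_iff.mpr hRcne
      have h4 : ‖Rc k‖ < C := lt_of_le_of_lt (hRcN k) hk1
      have h5 : C⁻¹ < ‖Rc k‖⁻¹ := inv_strictAnti₀ h3 h4
      exact lt_trans hk2 h5
    have hunit : IsUnit (z₀ • (1 : Matrix (Fin n) (Fin n) ℂ) - Ac) :=
      (Units.ofNearby _ _ hlt).isUnit
    rw [spectrum.mem_iff] at hz₀mem
    apply hz₀mem
    rwa [Algebra.algebraMap_eq_smul_one]
  -- the candidate vectors
  obtain ⟨g, hgdef⟩ : ∃ g : ℕ → (Fin n → ℝ),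
      g = fun k => N k *ᵥ (fun _ => (1 : ℝ)) := ⟨_, rfl⟩
  have hgnorm : ∀ k, ‖N k‖ ≤ ‖g k‖ := by
    intro k; rw [hgdef]
    exact linfty_norm_le_mulVec_one (N k) (hN0 k)
  have hgtend : Tendsto (fun k => ‖g k‖) atTop atTop :=
    tendsto_atTop_mono hgnorm hblow
  obtain ⟨K, hK⟩ := (tendsto_atTop.mp hgtend 1).exists_forall_of_atTop
  have hgpos : ∀ k, (0 : ℝ) < ‖g (k + K)‖ := fun k =>
    lt_of_lt_of_le zero_lt_one (hK (k + K) (Nat.le_add_left K k))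
  have hgent : ∀ k i, g k i = ∑ j, N k i j := by
    intro k i
    simp [hgdef, Matrix.mulVec, dotProduct]
  have hg0 : ∀ k i, 0 ≤ g k i := by
    intro k i
    rw [hgent]
    exact Finset.sum_nonneg fun j _ => hN0 k i j
  obtain ⟨u, hudef⟩ : ∃ u : ℕ → (Fin n → ℝ),
      u = fun k => (‖g (k + K)‖)⁻¹ • g (k + K) := ⟨_, rfl⟩
  have huapp : ∀ k i, u k i = ‖g (k + K)‖⁻¹ * g (k + K) i := by
    intro k i; rw [hudef]; rfl
  have hu0 : ∀ k i, 0 ≤ u k i := by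
    intro k i; rw [huapp]
    exact mul_nonneg (inv_nonneg.mpr (norm_nonneg _)) (hg0 (k + K) i)
  have hu1 : ∀ k i, u k i ≤ 1 := by
    intro k i
    have h1 : g (k + K) i ≤ ‖g (k + K)‖ :=
      le_trans (le_abs_self _) (norm_le_pi_norm (g (k + K)) i)
    rw [huapp]
    calc ‖g (k + K)‖⁻¹ * g (k + K) i ≤ ‖g (k + K)‖⁻¹ * ‖g (k + K)‖ :=
          mul_le_mul_of_nonneg_left h1 (inv_nonneg.mpr (norm_nonneg _))
      _ = 1 := inv_mul_cancel₀ (hgpos k).ne'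
  have hunorm : ∀ k, ‖u k‖ = 1 := by
    intro k
    rw [hudef]
    simp only [norm_smul, norm_inv, norm_norm]
    exact inv_mul_cancel₀ (hgpos k).ne'
  -- compactness: extract a convergent subsequence
  have hmem : ∀ k, u k ∈ Set.Icc (0 : Fin n → ℝ) 1 :=
    fun k => ⟨fun i => hu0 k i, fun i => hu1 k i⟩
  obtain ⟨f, _hfmem, φ, hφ, hflim⟩ :=
    (isCompact_Icc (a := (0 : Fin n → ℝ)) (b := 1)).tendsto_subseq hmem
  have hfc : ∀ i, Tendsto (fun m => u (φ m) i) atTop (𝓝 (f i)) := by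
    intro i
    exact tendsto_pi_nhds.mp hflim i
  have hf0 : ∀ i, 0 ≤ f i := fun i =>
    ge_of_tendsto' (hfc i) (fun m => hu0 (φ m) i)
  have hfnorm : ‖f‖ = 1 := by
    have h1 : Tendsto (fun m => ‖u (φ m)‖) atTop (𝓝 ‖f‖) := hflim.norm
    have h2 : (fun m => ‖u (φ m)‖) = fun _ => (1 : ℝ) := funext fun m => hunorm (φ m)
    rw [h2] at h1
    exact tendsto_nhds_unique h1 tendsto_const_nhds
  have hfne : f ≠ 0 := by
    intro h
    rw [h, norm_zero] at hfnorm
    norm_num at hfnorm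
  -- exact resolvent equation for the vectors
  have hgeq : ∀ k, μ k • g k - A *ᵥ g k = (fun _ => (1 : ℝ)) := by
    intro k
    have h1 := (hNid k).1
    have h2 : ((μ k • (1 : Matrix (Fin n) (Fin n) ℝ) - A) * N k) *ᵥ (fun _ => (1 : ℝ))
        = (fun _ => (1 : ℝ)) := by rw [h1, Matrix.one_mulVec]
    have hgk : g k = N k *ᵥ (fun _ => (1 : ℝ)) := by rw [hgdef]
    rw [← Matrix.mulVec_mulVec, Matrix.sub_mulVec, Matrix.smul_mulVec,
      Matrix.one_mulVec, ← hgk] at h2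
    exact h2
  have hueq : ∀ k i, (A *ᵥ u k) i = μ (k + K) * u k i - ‖g (k + K)‖⁻¹ := by
    intro k i
    have h1' : μ (k + K) * g (k + K) i - (A *ᵥ g (k + K)) i = 1 :=
      congr_fun (hgeq (k + K)) i
    have hAg : (A *ᵥ g (k + K)) i = μ (k + K) * g (k + K) i - 1 := by linarith
    have h2 : u k = ‖g (k + K)‖⁻¹ • g (k + K) := by rw [hudef]
    have h3 : A *ᵥ u k = ‖g (k + K)‖⁻¹ • (A *ᵥ g (k + K)) := by
      rw [h2, Matrix.mulVec_smul]
    have h4 : (A *ᵥ u k) i = ‖g (k + K)‖⁻¹ * (A *ᵥ g (k + K)) i := by rw [h3]; rfl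
    rw [h4, hAg, huapp k i]
    ring
  -- pass to the limit componentwise
  have hlimeq : ∀ i, (A *ᵥ f) i = r * f i := by
    intro i
    have hshift : Tendsto (fun m => φ m + K) atTop atTop :=
      (tendsto_add_atTop_nat K).comp hφ.tendsto_atTop
    have hμ' : Tendsto (fun m => μ (φ m + K)) atTop (𝓝 r) := hμtend.comp hshift
    have hc' : Tendsto (fun m => ‖g (φ m + K)‖⁻¹) atTop (𝓝 0) :=
      (hgtend.comp hshift).inv_tendsto_atTop
    have hL : Tendsto (fun m => (A *ᵥ u (φ m)) i) atTop (𝓝 ((A *ᵥ f) i)) := by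
      have hform : ∀ v : Fin n → ℝ, (A *ᵥ v) i = ∑ j, A i j * v j := fun v => rfl
      simp only [hform]
      exact tendsto_finset_sum _ fun j _ => (hfc j).const_mul (A i j)
    have hR : Tendsto (fun m => μ (φ m + K) * u (φ m) i - ‖g (φ m + K)‖⁻¹) atTop
        (𝓝 (r * f i - 0)) := (hμ'.mul (hfc i)).sub hc'
    rw [sub_zero] at hR
    have heqfun : (fun m => (A *ᵥ u (φ m)) i)
        = fun m => μ (φ m + K) * u (φ m) i - ‖g (φ m + K)‖⁻¹ :=
      funext fun m => hueq (φ m) i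
    rw [heqfun] at hL
    exact tendsto_nhds_unique hL hR
  refine ⟨f, hf0, hfne, ?_⟩
  have hBt : Bᵀ *ᵥ f = r • f := by
    rw [← hA]
    funext i
    rw [hlimeq i]; rfl
  rw [← Matrix.mulVec_transpose]
  exact hBt

end Aux7

/-- For a transient substochastic matrix `P` with termination vector `p = (I−P)𝟙`, and a
nonnegative matrix `B` and nonnegative vector `b` sandwiched entrywise between `c_l·P, c_l·p`
and `c_u·P, c_u·p` with `0 < c_l ≤ c_u`, there exists a left Perron vector `f ≥ 0`, `f ≠ 0`,
with `fᵀ B = ρ(B)·fᵀ` and `fᵀ b > 0`. -/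
theorem perron_vector_positive_on_termination (n : ℕ) (hn : 1 ≤ n)
    (P B : Matrix (Fin n) (Fin n) ℝ) (b : Fin n → ℝ) (cl cu : ℝ)
    (hcl : 0 < cl) (hclu : cl ≤ cu)
    (hP0 : ∀ i j, 0 ≤ P i j) (hProw : ∀ i, ∑ j, P i j ≤ 1) (hPspec : specRad P < 1)
    (hB0 : ∀ i j, 0 ≤ B i j) (hb0 : ∀ i, 0 ≤ b i)
    (hBl : ∀ i j, cl * P i j ≤ B i j) (hBu : ∀ i j, B i j ≤ cu * P i j)
    (hbl : ∀ i, cl * ((1 - P) *ᵥ (fun _ => (1 : ℝ))) i ≤ b i)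
    (hbu : ∀ i, b i ≤ cu * ((1 - P) *ᵥ (fun _ => (1 : ℝ))) i) :
    ∃ f : Fin n → ℝ, (∀ i, 0 ≤ f i) ∧ f ≠ 0 ∧
      f ᵥ* B = specRad B • f ∧ 0 < f ⬝ᵥ b := by
  have hn0 : 0 < n := hn
  obtain ⟨f, hf0, hfne, heig⟩ := exists_perron hn0 B hB0
  exact ⟨f, hf0, hfne, heig,
    dot_pos hn0 P B b cl hcl hP0 hProw hPspec hB0 hb0 hBl hbl f hf0 hfne _
      (specRad_nonneg hn0 B) heig⟩
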